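/- For every integer a, the operator t^{2a}(D + a) = w_{2a,1} + a·w_{2a,0} on ℂ[t,t⁻¹] belongs to the Lie subalgebra L of the ℂ-endomorphism algebra of ℂ[t,t⁻¹] generated (under commutator) by the four operators t, D³, t²(D+1) and t⁻²(D−1). (For a = 0 this says D ∈ L; for a = ±1 these are generators; the general case is the generation of the differential-degree-one part of W⁻ carried out in the proof of Lemma 2.4.) -/

import Mathlib

open Polynomial LaurentPolynomial

attribute [local instance 100] LieRing.ofAssociativeRing

private lemma end_ext' {f g : Module.End ℂ (LaurentPolynomial ℂ)}
    (h : ∀ m : ℤ, f (T m) = g (T m)) : f = g := by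
  apply AddMonoidAlgebra.lhom_ext'
  intro m
  apply LinearMap.ext_ring
  exact h m

private noncomputable def Uop (w : ℤ → ℕ → Module.End ℂ (LaurentPolynomial ℂ)) (a : ℤ) :
    Module.End ℂ (LaurentPolynomial ℂ) :=
  w (2 * a) 1 + (a : ℂ) • w (2 * a) 0

private lemma Uop_apply (w : ℤ → ℕ → Module.End ℂ (LaurentPolynomial ℂ))
    (hw : ∀ (k : ℤ) (l : ℕ) (m : ℤ),
      w k l (T m) = ((m : ℂ) ^ l) • (T (m + k) : LaurentPolynomial ℂ))
    (a m : ℤ) : Uop w a (T m) = (((m : ℂ) + a)) • T (m + 2 * a) := by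
  simp only [Uop, LinearMap.add_apply, LinearMap.smul_apply, hw, smul_smul]
  module

private lemma Uop_lie (w : ℤ → ℕ → Module.End ℂ (LaurentPolynomial ℂ))
    (hw : ∀ (k : ℤ) (l : ℕ) (m : ℤ),
      w k l (T m) = ((m : ℂ) ^ l) • (T (m + k) : LaurentPolynomial ℂ))
    (a b : ℤ) :
    ⁅Uop w a, Uop w b⁆ = (((2 * (b - a) : ℤ)) : ℂ) • Uop w (a + b) := by
  apply end_ext'
  intro m
  simp only [Ring.lie_def, LinearMap.sub_apply, LinearMap.smul_apply,
    Module.End.mul_apply, map_smul, Uop_apply w hw, smul_smul]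
  push_cast
  ring_nf
  (match_scalars; ring)

private lemma lie_t_Uneg (w : ℤ → ℕ → Module.End ℂ (LaurentPolynomial ℂ))
    (hw : ∀ (k : ℤ) (l : ℕ) (m : ℤ),
      w k l (T m) = ((m : ℂ) ^ l) • (T (m + k) : LaurentPolynomial ℂ)) :
    ⁅w 1 0, Uop w (-1)⁆ = (-1 : ℂ) • w (-1) 0 := by
  apply end_ext'
  intro m
  simp only [Ring.lie_def, LinearMap.sub_apply, LinearMap.smul_apply,
    Module.End.mul_apply, map_smul, Uop_apply w hw, hw, smul_smul]
  push_cast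
  ring_nf
  (match_scalars; ring)

private lemma lie_U2 (w : ℤ → ℕ → Module.End ℂ (LaurentPolynomial ℂ))
    (hw : ∀ (k : ℤ) (l : ℕ) (m : ℤ),
      w k l (T m) = ((m : ℂ) ^ l) • (T (m + k) : LaurentPolynomial ℂ)) :
    ⁅⁅⁅w 0 3, w 1 0⁆, Uop w 1⁆, w 1 0⁆ = (18 : ℂ) • Uop w 2 := by
  apply end_ext'
  intro m
  simp only [Ring.lie_def, LinearMap.sub_apply, LinearMap.smul_apply,
    Module.End.mul_apply, map_smul, map_sub, Uop_apply w hw, hw, smul_smul, smul_sub]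
  push_cast
  ring_nf
  (match_scalars; ring)

private lemma lie_U2' (w : ℤ → ℕ → Module.End ℂ (LaurentPolynomial ℂ))
    (hw : ∀ (k : ℤ) (l : ℕ) (m : ℤ),
      w k l (T m) = ((m : ℂ) ^ l) • (T (m + k) : LaurentPolynomial ℂ)) :
    ⁅⁅⁅w 0 3, w (-1) 0⁆, Uop w (-1)⁆, w (-1) 0⁆ = (-18 : ℂ) • Uop w (-2) := by
  apply end_ext'
  intro m
  simp only [Ring.lie_def, LinearMap.sub_apply, LinearMap.smul_apply,
    Module.End.mul_apply, map_smul, map_sub, Uop_apply w hw, hw, smul_smul, smul_sub]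
  push_cast
  ring_nf
  (match_scalars; ring)

private lemma smul_cancel_mem {S : LieSubalgebra ℂ (Module.End ℂ (LaurentPolynomial ℂ))}
    {c : ℂ} (hc : c ≠ 0) {x y : Module.End ℂ (LaurentPolynomial ℂ)}
    (hx : x ∈ S) (he : x = c • y) : y ∈ S := by
  have h := S.smul_mem c⁻¹ hx
  rwa [he, smul_smul, inv_mul_cancel₀ hc, one_smul] at h

/-- for every integer `a`, the operator
`t^{2a}(D + a) = w_{2a,1} + a·w_{2a,0}` on `ℂ[t,t⁻¹]` belongs to the Lie subalgebra
generated by the four operators `t`, `D³`, `t²(D+1)` and `t⁻²(D−1)`. -/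
theorem w_even_deg_one_mem_lieSpan
    (w : ℤ → ℕ → Module.End ℂ (LaurentPolynomial ℂ))
    (hw : ∀ (k : ℤ) (l : ℕ) (m : ℤ),
      w k l (T m) = ((m : ℂ) ^ l) • (T (m + k) : LaurentPolynomial ℂ))
    (a : ℤ) :
    w (2 * a) 1 + (a : ℂ) • w (2 * a) 0 ∈
      LieSubalgebra.lieSpan ℂ (Module.End ℂ (LaurentPolynomial ℂ))
        {w 1 0, w 0 3, w 2 1 + w 2 0, w (-2) 1 - w (-2) 0} := by
  set S := LieSubalgebra.lieSpan ℂ (Module.End ℂ (LaurentPolynomial ℂ))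
      {w 1 0, w 0 3, w 2 1 + w 2 0, w (-2) 1 - w (-2) 0} with hS
  -- generators
  have hg1 : w 1 0 ∈ S := LieSubalgebra.subset_lieSpan (by simp)
  have hg2 : w 0 3 ∈ S := LieSubalgebra.subset_lieSpan (by simp)
  have hU1 : Uop w 1 ∈ S := by
    have h : Uop w 1 = w 2 1 + w 2 0 := by norm_num [Uop]
    rw [h]
    exact LieSubalgebra.subset_lieSpan (by simp)
  have hU1' : Uop w (-1) ∈ S := by
    have h : Uop w (-1) = w (-2) 1 - w (-2) 0 := by
      rw [Uop]
      push_cast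
      module
    rw [h]
    exact LieSubalgebra.subset_lieSpan (by simp)
  have hneg1 : w (-1) 0 ∈ S :=
    smul_cancel_mem (by norm_num) (S.lie_mem hg1 hU1') (lie_t_Uneg w hw)
  have hU0 : Uop w 0 ∈ S := by
    have h := Uop_lie w hw 1 (-1)
    norm_num at h
    exact smul_cancel_mem (by norm_num : (-4 : ℂ) ≠ 0) (S.lie_mem hU1 hU1') h
  have hU2 : Uop w 2 ∈ S :=
    smul_cancel_mem (by norm_num)
      (S.lie_mem (S.lie_mem (S.lie_mem hg2 hg1) hU1) hg1) (lie_U2 w hw)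
  have hU2' : Uop w (-2) ∈ S :=
    smul_cancel_mem (by norm_num)
      (S.lie_mem (S.lie_mem (S.lie_mem hg2 hneg1) hU1') hneg1) (lie_U2' w hw)
  have main : ∀ n : ℕ, Uop w n ∈ S ∧ Uop w (-(n : ℤ)) ∈ S := by
    intro n
    induction n with
    | zero => simp only [Nat.cast_zero, neg_zero]; exact ⟨hU0, hU0⟩
    | succ n ih =>
      rcases n with _ | _ | k
      · norm_num
        exact ⟨hU1, hU1'⟩
      · norm_num
        exact ⟨hU2, hU2'⟩
      · push_cast at ih ⊢
        obtain ⟨ih1, ih2⟩ := ih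
        constructor
        · have h := Uop_lie w hw 1 ((k : ℤ) + 2)
          have e1 : (1 : ℤ) + ((k : ℤ) + 2) = (k : ℤ) + 3 := by ring
          rw [e1] at h
          have hc : (((2 * (((k : ℤ) + 2) - 1)) : ℤ) : ℂ) ≠ 0 := by
            exact_mod_cast (by omega : (2 * (((k : ℤ) + 2) - 1)) ≠ 0)
          have e2 : ((k : ℤ) + 1 + 1 + 1) = (k : ℤ) + 3 := by ring
          rw [e2]
          exact smul_cancel_mem hc (S.lie_mem hU1 ih1) h
        · have h := Uop_lie w hw (-1) (-((k : ℤ) + 2))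
          have e1 : (-1 : ℤ) + -((k : ℤ) + 2) = -((k : ℤ) + 3) := by ring
          rw [e1] at h
          have hc : (((2 * ((-((k : ℤ) + 2)) - (-1))) : ℤ) : ℂ) ≠ 0 := by
            exact_mod_cast (by omega : (2 * ((-((k : ℤ) + 2)) - (-1))) ≠ 0)
          have e2 : -((k : ℤ) + 1 + 1 + 1) = -((k : ℤ) + 3) := by ring
          rw [e2]
          exact smul_cancel_mem hc (S.lie_mem hU1' ih2) h
  show Uop w a ∈ S
  rcases Int.natAbs_eq a with h1 | h1
  · rw [h1]; exact (main a.natAbs).1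
  · rw [h1]; exact (main a.natAbs).2
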